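/- Characterization of 2-input 2-output nonsignalling boxes with singular disagreement: a nonsignalling box P with inputs x,y ∈ {0,1} and outputs a,b ∈ {0,1} exhibits singular disagreement if and only if there exist reals r, s, t, u with s > 0, s + t ≠ 0, and u + t ≠ 1 such that all sixteen entries below are nonnegative and P(0,0|0,0)=s, P(0,1|0,0)=t, P(1,0|0,0)=1−s−u−t, P(1,1|0,0)=u; P(0,0|0,1)=0, P(0,1|0,1)=s+t, P(1,0|0,1)=r, P(1,1|0,1)=1−s−t−r; P(0,0|1,0)=1−u−t, P(0,1|1,0)=u+t+r−1, P(1,0|1,0)=0, P(1,1|1,0)=1−r; P(0,0|1,1)=r, P(0,1|1,1)=0, P(1,0|1,1)=0, P(1,1|1,1)=1−r. -/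

import Mathlib

open Finset
open scoped ComplexOrder

attribute [local instance] Classical.propDecidable

noncomputable section

/-- A bipartite box `P a b x y = P(a,b|x,y)`: nonnegative entries summing to one over
the outputs, for every pair of inputs. -/
def IsBox {nA nB nX nY : ℕ} (P : Fin nA → Fin nB → Fin nX → Fin nY → ℝ) : Prop :=
  (∀ a b x y, 0 ≤ P a b x y) ∧ ∀ x y, ∑ a, ∑ b, P a b x y = 1

/-- A bipartite box is nonsignalling if Alice's output marginal does not depend on
Bob's input and vice versa. -/
def NonSignallingBox {nA nB nX nY : ℕ}
    (P : Fin nA → Fin nB → Fin nX → Fin nY → ℝ) : Prop :=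
  (∀ a x y y', ∑ b, P a b x y = ∑ b, P a b x y') ∧
  (∀ b y x x', ∑ a, P a b x y = ∑ a, P a b x' y)

/-- A quantum box: realised by local POVMs on a shared bipartite quantum state. -/
def IsQuantumBox {nA nB nX nY : ℕ}
    (P : Fin nA → Fin nB → Fin nX → Fin nY → ℝ) : Prop :=
  ∃ (dA dB : ℕ) (ρ : Matrix (Fin dA × Fin dB) (Fin dA × Fin dB) ℂ)
    (E : Fin nX → Fin nA → Matrix (Fin dA) (Fin dA) ℂ)
    (F : Fin nY → Fin nB → Matrix (Fin dB) (Fin dB) ℂ),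
    ρ.PosSemidef ∧ ρ.trace = 1 ∧
    (∀ x a, (E x a).PosSemidef) ∧ (∀ x, ∑ a, E x a = 1) ∧
    (∀ y b, (F y b).PosSemidef) ∧ (∀ y, ∑ b, F y b = 1) ∧
    ∀ a b x y, (P a b x y : ℂ) =
      ∑ q : Fin dA × Fin dB, ∑ q' : Fin dA × Fin dB,
        E x a q.1 q'.1 * F y b q.2 q'.2 * ρ q' q

/-- The pair of output sets `(αₙ, βₙ)` of the agreement argument for boxes:
`α₀` is the set of Alice's outputs (on input `x0`) for which she assigns conditional
probability `qA` to Bob outputting `b1` on input `y1` (similarly `β₀` for Bob), and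
`α_{n+1}` (resp. `β_{n+1}`) is the subset of `αₙ` (resp. `βₙ`) at which Alice (resp.
Bob) is moreover certain, on inputs `(x0, y0)`, that Bob's (resp. Alice's) output lies
in `βₙ` (resp. `αₙ`). -/
def ccdSets {nA nB nX nY : ℕ} (P : Fin nA → Fin nB → Fin nX → Fin nY → ℝ)
    (x0 x1 : Fin nX) (y0 y1 : Fin nY) (a1 : Fin nA) (b1 : Fin nB) (qA qB : ℝ) :
    ℕ → Finset (Fin nA) × Finset (Fin nB)
  | 0 => (univ.filter fun a => P a b1 x0 y1 / (∑ b, P a b x0 y1) = qA,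
          univ.filter fun b => P a1 b x1 y0 / (∑ a, P a b x1 y0) = qB)
  | n + 1 =>
      let s := ccdSets P x0 x1 y0 y1 a1 b1 qA qB n
      (s.1.filter fun a => (∑ b ∈ s.2, P a b x0 y0) / (∑ b, P a b x0 y0) = 1,
       s.2.filter fun b => (∑ a ∈ s.1, P a b x0 y0) / (∑ a, P a b x0 y0) = 1)

/-- A box exhibits **common certainty of disagreement** (at inputs/outputs `(0,0,0,0)`,
about the outputs of interest `(1,1)` on inputs `(1,1)`) if: the outputs on inputs
`(1,1)` are perfectly correlated, the event `(0,0,0,0)` has positive probability, and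
there are `q_A ≠ q_B` in `[0,1]` with `0 ∈ αₙ` and `0 ∈ βₙ` for every `n`. -/
def HasCCD {nA nB nX nY : ℕ} (hA : 2 ≤ nA) (hB : 2 ≤ nB) (hX : 2 ≤ nX) (hY : 2 ≤ nY)
    (P : Fin nA → Fin nB → Fin nX → Fin nY → ℝ) : Prop :=
  let a0 : Fin nA := ⟨0, by omega⟩
  let a1 : Fin nA := ⟨1, hA⟩
  let b0 : Fin nB := ⟨0, by omega⟩
  let b1 : Fin nB := ⟨1, hB⟩
  let x0 : Fin nX := ⟨0, by omega⟩
  let x1 : Fin nX := ⟨1, hX⟩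
  let y0 : Fin nY := ⟨0, by omega⟩
  let y1 : Fin nY := ⟨1, hY⟩
  (∀ (a : Fin nA) (b : Fin nB), (a : ℕ) ≠ (b : ℕ) → P a b x1 y1 = 0) ∧
  0 < P a0 b0 x0 y0 ∧
  ∃ qA qB : ℝ, qA ∈ Set.Icc (0 : ℝ) 1 ∧ qB ∈ Set.Icc (0 : ℝ) 1 ∧ qA ≠ qB ∧
    ∀ n : ℕ, a0 ∈ (ccdSets P x0 x1 y0 y1 a1 b1 qA qB n).1 ∧
             b0 ∈ (ccdSets P x0 x1 y0 y1 a1 b1 qA qB n).2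

/-- A box exhibits **singular disagreement** if: the outputs on inputs `(1,1)` are
perfectly correlated, the event `(0,0,0,0)` has positive probability, and the
well-defined conditional probabilities satisfy `P(b=1|a=0,x=0,y=1) = 1` and
`P(a=1|b=0,x=1,y=0) = 0`. -/
def HasSD {nA nB nX nY : ℕ} (hA : 2 ≤ nA) (hB : 2 ≤ nB) (hX : 2 ≤ nX) (hY : 2 ≤ nY)
    (P : Fin nA → Fin nB → Fin nX → Fin nY → ℝ) : Prop :=
  let a0 : Fin nA := ⟨0, by omega⟩
  let a1 : Fin nA := ⟨1, hA⟩
  let b0 : Fin nB := ⟨0, by omega⟩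
  let b1 : Fin nB := ⟨1, hB⟩
  let x0 : Fin nX := ⟨0, by omega⟩
  let x1 : Fin nX := ⟨1, hX⟩
  let y0 : Fin nY := ⟨0, by omega⟩
  let y1 : Fin nY := ⟨1, hY⟩
  (∀ (a : Fin nA) (b : Fin nB), (a : ℕ) ≠ (b : ℕ) → P a b x1 y1 = 0) ∧
  0 < P a0 b0 x0 y0 ∧
  (0 < ∑ b, P a0 b x0 y1 ∧ P a0 b1 x0 y1 / (∑ b, P a0 b x0 y1) = 1) ∧
  (0 < ∑ a, P a b0 x1 y0 ∧ P a1 b0 x1 y0 / (∑ a, P a b0 x1 y0) = 0)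

theorem hasSD_iff_explicit (P : Fin 2 → Fin 2 → Fin 2 → Fin 2 → ℝ) :
    HasSD (le_refl 2) (le_refl 2) (le_refl 2) (le_refl 2) P ↔
    ((∀ (a b : Fin 2), (a : ℕ) ≠ (b : ℕ) → P a b 1 1 = 0) ∧
     0 < P 0 0 0 0 ∧
     (0 < P 0 0 0 1 + P 0 1 0 1 ∧ P 0 1 0 1 / (P 0 0 0 1 + P 0 1 0 1) = 1) ∧
     (0 < P 0 0 1 0 + P 1 0 1 0 ∧ P 1 0 1 0 / (P 0 0 1 0 + P 1 0 1 0) = 0)) := by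
  simp only [HasSD, Fin.sum_univ_two]
  exact Iff.rfl

/-- **Characterisation of 2-input 2-output nonsignalling boxes with singular
disagreement.** Such a box exhibits singular disagreement iff its entries take the
tabulated form, for parameters `r, s, t, u` with `s > 0`, `s + t ≠ 0` and `u + t ≠ 1`
making all sixteen entries nonnegative. -/
theorem sd_characterisation (P : Fin 2 → Fin 2 → Fin 2 → Fin 2 → ℝ)
    (hbox : IsBox P) (hns : NonSignallingBox P) :
    HasSD (le_refl 2) (le_refl 2) (le_refl 2) (le_refl 2) P ↔
    ∃ r s t u : ℝ, 0 < s ∧ s + t ≠ 0 ∧ u + t ≠ 1 ∧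
      (0 ≤ s ∧ 0 ≤ t ∧ 0 ≤ 1 - s - u - t ∧ 0 ≤ u ∧
       0 ≤ s + t ∧ 0 ≤ r ∧ 0 ≤ 1 - s - t - r ∧
       0 ≤ 1 - u - t ∧ 0 ≤ u + t + r - 1 ∧ 0 ≤ 1 - r) ∧
      P 0 0 0 0 = s ∧ P 0 1 0 0 = t ∧ P 1 0 0 0 = 1 - s - u - t ∧ P 1 1 0 0 = u ∧
      P 0 0 0 1 = 0 ∧ P 0 1 0 1 = s + t ∧ P 1 0 0 1 = r ∧ P 1 1 0 1 = 1 - s - t - r ∧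
      P 0 0 1 0 = 1 - u - t ∧ P 0 1 1 0 = u + t + r - 1 ∧ P 1 0 1 0 = 0 ∧
        P 1 1 1 0 = 1 - r ∧
      P 0 0 1 1 = r ∧ P 0 1 1 1 = 0 ∧ P 1 0 1 1 = 0 ∧ P 1 1 1 1 = 1 - r := by
  obtain ⟨hpos, hsum⟩ := hbox
  obtain ⟨hAns, hBns⟩ := hns
  have e00 := hsum 0 0
  have e01 := hsum 0 1
  have e10 := hsum 1 0
  have e11 := hsum 1 1
  simp only [Fin.sum_univ_two] at e00 e01 e10 e11
  have a001 := hAns 0 0 0 1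
  have a101 := hAns 0 1 0 1
  have b001 := hBns 0 0 0 1
  have b101 := hBns 1 1 0 1
  simp only [Fin.sum_univ_two] at a001 a101 b001 b101
  rw [hasSD_iff_explicit]
  constructor
  · rintro ⟨hcor, hp, ⟨hs1, hr1⟩, ⟨hs2, hr2⟩⟩
    have h0111 : P 0 1 1 1 = 0 := hcor 0 1 (by decide)
    have h1011 : P 1 0 1 1 = 0 := hcor 1 0 (by decide)
    have h0001 : P 0 0 0 1 = 0 := by
      have := (div_eq_one_iff_eq (ne_of_gt hs1)).mp hr1
      linarith
    have h1010 : P 1 0 1 0 = 0 := by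
      rcases div_eq_zero_iff.mp hr2 with h | h
      · exact h
      · exact absurd h (ne_of_gt hs2)
    refine ⟨P 0 0 1 1, P 0 0 0 0, P 0 1 0 0, P 1 1 0 0, hp, by linarith, by linarith,
      ⟨hpos 0 0 0 0, hpos 0 1 0 0, by linarith [hpos 1 0 (0:Fin 2) 0],
       hpos 1 1 0 0, by linarith, hpos 0 0 1 1, by linarith [hpos 1 1 (0:Fin 2) 1],
       by linarith [hpos 0 0 (1:Fin 2) 0], by linarith [hpos 0 1 (1:Fin 2) 0],
       by linarith [hpos 1 1 (1:Fin 2) 1]⟩,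
      rfl, rfl, by linarith, rfl,
      h0001, by linarith, by linarith, by linarith,
      by linarith, by linarith, h1010, by linarith,
      rfl, h0111, h1011, by linarith⟩
  · rintro ⟨r, s, t, u, hs, hst, hut, hnn,
      h1, h2, h3, h4, h5, h6, h7, h8, h9, h10, h11, h12, h13, h14, h15, h16⟩
    obtain ⟨n1, n2, n3, n4, n5, n6, n7, n8, n9, n10⟩ := hnn
    have hstpos : 0 < s + t := lt_of_le_of_ne n5 (Ne.symm hst)
    have hutpos : 0 < 1 - u - t := lt_of_le_of_ne n8 (by intro h; apply hut; linarith)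
    refine ⟨?_, by rw [h1]; exact hs, ⟨by rw [h5, h6]; linarith, ?_⟩,
      ⟨by rw [h9, h11]; linarith, ?_⟩⟩
    · intro a b hab
      clear hAns hBns hsum hpos
      fin_cases a <;> fin_cases b <;> simp_all
    · rw [h5, h6]
      field_simp
      ring
    · rw [h9, h11]
      simp
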